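/- Let f : ℝ → ℝ be absolutely continuous on an interval I with derivative f' ∈ L¹_loc. Then for every Lebesgue-null Borel set A ⊂ ℝ, the set {x ∈ I : f(x) ∈ A and f'(x) ≠ 0} has Lebesgue measure zero. Equivalently, the image under f of the measure |f'(x)|·dx is absolutely continuous with respect to Lebesgue measure. -/

import Mathlib

open MeasureTheory

open Metric Filter Set intervalIntegral Topology


lemma aux_ae_hasDerivAt {g : ℝ → ℝ} (hg_int : Integrable g volume) (a : ℝ) :
    ∀ᵐ x, HasDerivAt (fun y => ∫ t in a..y, g t) (g x) x := by
  have hleb : ∀ᵐ x, Tendsto (fun r => ⨍ t in closedBall x r, ‖g t - g x‖) (𝓝[>] 0) (𝓝 0) := by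
    filter_upwards [(Besicovitch.vitaliFamily volume).ae_tendsto_average_norm_sub
      hg_int.locallyIntegrable] with x hx
    exact hx.comp (Besicovitch.tendsto_filterAt volume x)
  filter_upwards [hleb] with x hx
  rw [hasDerivAt_iff_tendsto_slope, tendsto_iff_norm_sub_tendsto_zero]
  have habs : Tendsto (fun y => |y - x|) (𝓝[≠] x) (𝓝[>] 0) := by
    rw [tendsto_nhdsWithin_iff]
    constructor
    · have h1 : Tendsto (fun y : ℝ => |y - x|) (𝓝 x) (𝓝 |x - x|) :=
        ((continuous_id.sub continuous_const).abs).tendsto x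
      simpa using h1.mono_left nhdsWithin_le_nhds
    · exact eventually_mem_nhdsWithin.mono fun y hy => abs_pos.2 (sub_ne_zero.2 hy)
  have hB : Tendsto (fun y => 2 * ⨍ t in closedBall x |y - x|, ‖g t - g x‖) (𝓝[≠] x) (𝓝 0) := by
    have := (hx.comp habs).const_mul 2
    simpa using this
  apply squeeze_zero' (Eventually.of_forall fun y => norm_nonneg _) _ hB
  filter_upwards [eventually_mem_nhdsWithin] with y (hy : y ≠ x)
  have hr : 0 < |y - x| := abs_pos.2 (sub_ne_zero.2 hy)
  have hyx : y - x ≠ 0 := sub_ne_zero.2 hy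
  have hGsub : (∫ t in a..y, g t) - (∫ t in a..x, g t) = ∫ t in x..y, g t := by
    rw [← intervalIntegral.integral_add_adjacent_intervals
      (hg_int.intervalIntegrable) (hg_int.intervalIntegrable)]
    ring
  have hkey : slope (fun y => ∫ t in a..y, g t) x y - g x
      = (y - x)⁻¹ * ∫ t in x..y, (g t - g x) := by
    rw [intervalIntegral.integral_sub hg_int.intervalIntegrable intervalIntegrable_const,
      intervalIntegral.integral_const, slope_def_field, ← hGsub, smul_eq_mul]
    field_simp
  rw [hkey]
  have hsub : Set.uIoc x y ⊆ closedBall x |y - x| := by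
    intro t ht
    obtain ⟨h1, h2⟩ := ht
    rw [mem_closedBall, Real.dist_eq, abs_le]
    rcases le_total x y with h | h
    · rw [inf_eq_left.2 h] at h1
      rw [sup_eq_right.2 h] at h2
      rw [abs_of_nonneg (by linarith : (0:ℝ) ≤ y - x)]
      constructor <;> linarith
    · rw [inf_eq_right.2 h] at h1
      rw [sup_eq_left.2 h] at h2
      rw [abs_of_nonpos (by linarith : y - x ≤ 0)]
      constructor <;> linarith
  have hint_cb : IntegrableOn (fun t => ‖g t - g x‖) (closedBall x |y - x|) volume :=
    (hg_int.integrableOn.sub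
      (integrableOn_const measure_closedBall_lt_top.ne)).norm
  have h1 : ‖∫ t in x..y, (g t - g x)‖ ≤ ∫ t in closedBall x |y - x|, ‖g t - g x‖ := by
    refine le_trans (intervalIntegral.norm_integral_le_integral_norm_uIoc) ?_
    exact setIntegral_mono_set hint_cb (Eventually.of_forall fun t => norm_nonneg _)
      (hsub.eventuallyLE)
  have hvol : (volume (closedBall x |y - x|)).toReal = 2 * |y - x| := by
    rw [Real.volume_closedBall, ENNReal.toReal_ofReal (by positivity)]
  have h2 : ∫ t in closedBall x |y - x|, ‖g t - g x‖
      = (2 * |y - x|) * ⨍ t in closedBall x |y - x|, ‖g t - g x‖ := by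
    rw [setAverage_eq, smul_eq_mul, ← mul_assoc, measureReal_def, hvol, mul_inv_cancel₀ (by positivity), one_mul]
  rw [norm_mul, norm_inv, Real.norm_eq_abs, Real.norm_eq_abs]
  calc |y - x|⁻¹ * |∫ t in x..y, (g t - g x)|
      ≤ |y - x|⁻¹ * ((2 * |y - x|) * ⨍ t in closedBall x |y - x|, ‖g t - g x‖) := by
        rw [← h2]
        exact mul_le_mul_of_nonneg_left (by simpa [Real.norm_eq_abs] using h1) (by positivity)
    _ = 2 * ⨍ t in closedBall x |y - x|, ‖g t - g x‖ := by field_simp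

/-- One-dimensional Energy Image Density property: if `f` is absolutely continuous on
`[a,b]` with integrable derivative `f'`, then for every Lebesgue-null Borel set `A`,
the set `{x ∈ [a,b] : f(x) ∈ A, f'(x) ≠ 0}` is Lebesgue-null; equivalently
`f_*(|f'|·λ) ≪ λ`. -/
theorem stmt12 (a b : ℝ) (hab : a ≤ b) (f f' : ℝ → ℝ)
    (hf'meas : Measurable f') (hf'int : IntegrableOn f' (Set.Icc a b) volume)
    (hfac : ∀ x ∈ Set.Icc a b, f x = f a + ∫ t in a..x, f' t) :
    ∀ A : Set ℝ, MeasurableSet A → volume A = 0 →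
      volume {x ∈ Set.Icc a b | f x ∈ A ∧ f' x ≠ 0} = 0 := by
  intro A hA hA0
  set g : ℝ → ℝ := (Set.Icc a b).indicator f' with hg_def
  have hg_int : Integrable g volume := (integrable_indicator_iff measurableSet_Icc).2 hf'int
  set G : ℝ → ℝ := fun y => ∫ t in a..y, g t with hG_def
  have hGc : Continuous G :=
    intervalIntegral.continuous_primitive (fun c d => hg_int.intervalIntegrable) a
  have hfeq : ∀ x ∈ Set.Icc a b, f x = f a + G x := by
    intro x hx
    rw [hfac x hx]
    congr 1
    apply intervalIntegral.integral_congr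
    intro t ht
    rw [Set.uIcc_of_le hx.1] at ht
    have htI : t ∈ Set.Icc a b := ⟨ht.1, ht.2.trans hx.2⟩
    exact (Set.indicator_of_mem htI f').symm
  have hD := aux_ae_hasDerivAt hg_int a
  obtain ⟨N, hNsub, hNmeas, hNnull⟩ := exists_measurable_superset_of_null (ae_iff.1 hD)
  set s : Set ℝ := ((Set.Ioo a b ∩ (fun x => f a + G x) ⁻¹' A) ∩ {x | f' x ≠ 0}) \ N
    with hs_def
  have hne_meas : MeasurableSet {x | f' x ≠ 0} := by
    have : MeasurableSet (f' ⁻¹' ({0}ᶜ)) := hf'meas (measurableSet_singleton 0).compl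
    exact this
  have hs_meas : MeasurableSet s :=
    ((measurableSet_Ioo.inter ((continuous_const.add hGc).measurable hA)).inter
      hne_meas).diff hNmeas
  set F' : ℝ → (ℝ →L[ℝ] ℝ) := fun x => (1 : ℝ →L[ℝ] ℝ).smulRight (f' x) with hF'_def
  have hf's : ∀ x ∈ s, HasFDerivWithinAt f (F' x) s x := by
    intro x hx
    obtain ⟨⟨⟨hxIoo, hxA⟩, hxf'⟩, hxN⟩ := hx
    have hxD : HasDerivAt G (g x) x := by
      by_contra h; exact hxN (hNsub h)
    have hgx : g x = f' x := Set.indicator_of_mem (Set.mem_Icc_of_Ioo hxIoo) f'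
    have h1 : HasDerivAt (fun y => f a + G y) (f' x) x := by
      rw [← hgx]; exact hxD.const_add (f a)
    have h2 : HasDerivAt f (f' x) x := by
      apply h1.congr_of_eventuallyEq
      filter_upwards [Icc_mem_nhds hxIoo.1 hxIoo.2] with y hy
      exact hfeq y hy
    exact h2.hasDerivWithinAt.hasFDerivWithinAt
  have hs0 : volume s = 0 := by
    rcases Set.eq_empty_or_nonempty s with hse | hsne
    · simp [hse]
    set r : (ℝ →L[ℝ] ℝ) → NNReal := fun L => if L 1 = 0 then 1 else ‖L 1‖₊ / 2 with hr_def
    have hrpos : ∀ L : ℝ →L[ℝ] ℝ, r L ≠ 0 := by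
      intro L
      by_cases h : L 1 = 0
      · simp [hr_def, h]
      · simp [hr_def, h, nnnorm_eq_zero]
    obtain ⟨t, L, t_disj, t_meas, t_cover, t_approx, t_L⟩ :=
      exists_partition_approximatesLinearOn_of_hasFDerivWithinAt f s F' hf's r hrpos
    have key : ∀ n, (∫⁻ x in s ∩ t n, ENNReal.ofReal |f' x| ∂volume) = 0 := by
      intro n
      obtain ⟨y, hys, hLy⟩ := t_L hsne n
      have hfy : f' y ≠ 0 := hys.1.2
      have hfy' : (0:ℝ) < |f' y| := abs_pos.2 hfy
      have hL1 : L n 1 = f' y := by rw [hLy]; simp [hF'_def]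
      have hinj : Set.InjOn f (s ∩ t n) := by
        intro u hu v hv huv
        have h := t_approx n u hu v hv
        rw [huv, sub_self, zero_sub, norm_neg] at h
        have hval : L n (u - v) = (u - v) * f' y := by
          rw [hLy]; simp [hF'_def, smul_eq_mul]
        have hrL : ((r (L n) : NNReal) : ℝ) = |f' y| / 2 := by
          rw [hr_def]
          simp only [hL1, if_neg hfy]
          rw [NNReal.coe_div]
          norm_num [Real.norm_eq_abs, coe_nnnorm]
        rw [hval, Real.norm_eq_abs, abs_mul, Real.norm_eq_abs, hrL] at h
        have habs : |u - v| ≤ 0 := by nlinarith [abs_nonneg (u - v)]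
        have : u - v = 0 := abs_eq_zero.1 (le_antisymm habs (abs_nonneg _))
        linarith
      have hle := lintegral_abs_det_fderiv_le_addHaar_image volume
        (hs_meas.inter (t_meas n))
        (fun x hx => (hf's x hx.1).mono Set.inter_subset_left) hinj
      have himg : volume (f '' (s ∩ t n)) = 0 := by
        apply measure_mono_null _ hA0
        rintro - ⟨x, hx, rfl⟩
        have hxI : x ∈ Set.Icc a b := Set.mem_Icc_of_Ioo hx.1.1.1.1
        rw [hfeq x hxI]
        exact hx.1.1.1.2
      refine le_antisymm ?_ zero_le
      calc (∫⁻ x in s ∩ t n, ENNReal.ofReal |f' x| ∂volume)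
          = ∫⁻ x in s ∩ t n, ENNReal.ofReal |(F' x).det| ∂volume := by
            simp only [hF'_def, ContinuousLinearMap.smulRight_one_eq_toSpanSingleton, ContinuousLinearMap.det_toSpanSingleton]
        _ ≤ volume (f '' (s ∩ t n)) := hle
        _ = 0 := himg
    have htot : (∫⁻ x in s, ENNReal.ofReal |f' x| ∂volume) = 0 := by
      have hsU : s = ⋃ n, s ∩ t n := by
        rw [← Set.inter_iUnion]
        exact (Set.inter_eq_left.2 t_cover).symm
      rw [hsU, lintegral_iUnion (fun n => hs_meas.inter (t_meas n))
        (fun i j hij => ((t_disj hij).mono Set.inter_subset_right Set.inter_subset_right))]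
      simp [key]
    have hmeas' : Measurable fun x => ENNReal.ofReal |f' x| :=
      ENNReal.measurable_ofReal.comp hf'meas.abs
    have hae : ∀ᵐ x ∂(volume.restrict s), ENNReal.ofReal |f' x| = 0 :=
      (lintegral_eq_zero_iff hmeas').1 htot
    have h2 : ∀ᵐ x ∂(volume.restrict s), False := by
      filter_upwards [hae, ae_restrict_mem hs_meas] with x h1 hxs
      have hne : f' x ≠ 0 := hxs.1.2
      rw [ENNReal.ofReal_eq_zero] at h1
      exact hne (abs_eq_zero.1 (le_antisymm h1 (abs_nonneg _)))
    have := ae_iff.1 h2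
    simp only [not_false_iff, Set.setOf_true] at this
    rwa [Measure.restrict_apply_univ] at this
  have hsubset : {x ∈ Set.Icc a b | f x ∈ A ∧ f' x ≠ 0} ⊆ s ∪ (N ∪ {a, b}) := by
    rintro x ⟨hxI, hxA, hxf⟩
    by_cases hxab : x = a ∨ x = b
    · exact Or.inr (Or.inr (by rcases hxab with h | h <;> simp [h]))
    push_neg at hxab
    have hxIoo : x ∈ Set.Ioo a b :=
      ⟨lt_of_le_of_ne hxI.1 (Ne.symm hxab.1), lt_of_le_of_ne hxI.2 hxab.2⟩
    by_cases hxN : x ∈ N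
    · exact Or.inr (Or.inl hxN)
    · refine Or.inl ⟨⟨⟨hxIoo, ?_⟩, hxf⟩, hxN⟩
      show f a + G x ∈ A
      rw [← hfeq x hxI]
      exact hxA
  apply measure_mono_null hsubset
  refine measure_union_null hs0 (measure_union_null hNnull ?_)
  exact (Set.toFinite ({a, b} : Set ℝ)).countable.measure_zero volume
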